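/- Let (W,h) be a finite-dimensional real inner product space, let J be a linear isometry of W with J∘J = −id, and let L be a skew-adjoint endomorphism of W (with respect to h) satisfying L∘J = J∘L. Then there exist a natural number m with dim W = 2m, orthonormal vectors e_1,…,e_m in W such that (e_1,…,e_m, Je_1,…,Je_m) is an orthonormal basis of W, and real numbers l_1,…,l_m such that L e_j = l_j · (J e_j) and L(J e_j) = −l_j · e_j for all j = 1,…,m. -/

import Mathlib

open scoped RealInnerProductSpace

open Module Submodule

private lemma mem_orth_span_aux {W : Type*} [NormedAddCommGroup W] [InnerProductSpace ℝ W]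
    (S : Set W) (x : W) (h : ∀ u ∈ S, ⟪u, x⟫ = 0) : x ∈ (span ℝ S)ᗮ := by
  rw [Submodule.mem_orthogonal]
  intro u hu
  induction hu using Submodule.span_induction with
  | mem u hu => exact h u hu
  | zero => simp
  | add u v _ _ hu hv => simp [inner_add_left, hu, hv]
  | smul c u _ hu => simp [inner_smul_left, hu]

private lemma aux_main {W : Type*} [NormedAddCommGroup W] [InnerProductSpace ℝ W]
    [FiniteDimensional ℝ W] (J A : W →ₗ[ℝ] W)
    (hJiso : ∀ x y : W, ⟪J x, J y⟫ = ⟪x, y⟫)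
    (hJ2 : ∀ x : W, J (J x) = -x)
    (hA : ∀ x y : W, ⟪A x, y⟫ = ⟪x, A y⟫)
    (hAJ : ∀ x : W, A (J x) = J (A x)) :
    ∀ n : ℕ, ∀ V : Submodule ℝ W, finrank ℝ V = n →
      (∀ x ∈ V, J x ∈ V) → (∀ x ∈ V, A x ∈ V) →
      ∃ (m : ℕ) (e : Fin m → W) (l : Fin m → ℝ),
        n = 2 * m ∧
        Orthonormal ℝ (Sum.elim e (fun j => J (e j))) ∧
        span ℝ (Set.range (Sum.elim e (fun j => J (e j)))) = V ∧
        ∀ j, A (e j) = l j • e j := by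
  have hJskew : ∀ x y : W, ⟪J x, y⟫ = -⟪x, J y⟫ := by
    intro x y
    have := hJiso x (J y)
    rw [hJ2 y, inner_neg_right] at this
    linarith
  intro n
  induction n using Nat.strong_induction_on with
  | _ n ih =>
    intro V hV hJV hAV
    rcases Nat.eq_zero_or_pos n with hn0 | hn0
    · subst hn0
      have hVbot : V = ⊥ := Submodule.finrank_eq_zero.mp hV
      refine ⟨0, Fin.elim0, Fin.elim0, rfl, ?_, ?_, fun j => j.elim0⟩
      · rw [orthonormal_iff_ite]; intro i; exact isEmptyElim i
      · rw [hVbot]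
        have : Set.range (Sum.elim (Fin.elim0 : Fin 0 → W) (fun j => J (Fin.elim0 j))) = ∅ :=
          Set.range_eq_empty _
        rw [this, Submodule.span_empty]
    · -- positive dimension case
      have hA' : (A.restrict hAV).IsSymmetric := by
        intro x y
        have h1 : ((A.restrict hAV) x : W) = A x := rfl
        have h2 : ((A.restrict hAV) y : W) = A y := rfl
        rw [Submodule.coe_inner, Submodule.coe_inner, h1, h2]
        exact hA x y
      have hVn : finrank ℝ V = n := hV
      set b := hA'.eigenvectorBasis hVn with hb
      set i0 : Fin n := ⟨0, hn0⟩
      set v : W := (b i0 : W) with hvdef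
      have hvV : v ∈ V := (b i0).2
      have hvnorm1 : ‖v‖ = 1 := by
        have := b.orthonormal.1 i0
        rwa [← Submodule.norm_coe] at this
      have hvnorm : ⟪v, v⟫ = 1 := by
        rw [real_inner_self_eq_norm_mul_norm, hvnorm1]; ring
      set μ : ℝ := hA'.eigenvalues hVn i0 with hμ
      have hAv : A v = μ • v := by
        have key := congrArg (fun z : V => (z : W)) (hA'.apply_eigenvectorBasis hVn i0)
        simp only [LinearMap.restrict_coe_apply, Submodule.coe_smul] at key
        exact_mod_cast key
      have hJvV : J v ∈ V := hJV v hvV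
      have hvJv : ⟪v, J v⟫ = 0 := by
        have h1 : ⟪J v, J (J v)⟫ = ⟪v, J v⟫ := hJiso v (J v)
        rw [hJ2 v, inner_neg_right] at h1
        have h2 := real_inner_comm (J v) v
        linarith
      have hJvJv : ⟪J v, J v⟫ = 1 := by rw [hJiso]; exact hvnorm
      have hJvv : ⟪J v, v⟫ = 0 := by rw [real_inner_comm]; exact hvJv
      have hAJv : A (J v) = μ • J v := by rw [hAJ, hAv, map_smul]
      -- the span of v, J v
      set K : Submodule ℝ W := span ℝ {v, J v} with hK
      have hvK : v ∈ K := Submodule.subset_span (Set.mem_insert _ _)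
      have hJvK : J v ∈ K := Submodule.subset_span (Set.mem_insert_of_mem _ rfl)
      have hKV : K ≤ V := by
        rw [hK, Submodule.span_le]
        rintro x (rfl | rfl)
        exacts [hvV, hJvV]
      have hKrank : finrank ℝ K = 2 := by
        have hon : Orthonormal ℝ (![v, J v]) := by
          rw [orthonormal_iff_ite]
          intro i j
          fin_cases i <;> fin_cases j <;>
            simp [hvnorm, hvJv, hJvJv, hJvv, hvnorm1, (pow_eq_one_iff_of_nonneg (norm_nonneg (J v)) two_ne_zero).mp (by rw [← real_inner_self_eq_norm_sq, hJvJv])]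
        have hrange : Set.range (![v, J v]) = {v, J v} := by
          ext x
          constructor
          · rintro ⟨i, rfl⟩
            fin_cases i <;> simp
          · rintro (rfl | rfl)
            exacts [⟨0, rfl⟩, ⟨1, rfl⟩]
        have := hon.linearIndependent
        rw [hK, ← hrange]
        rw [finrank_span_eq_card this]
        simp
      -- the orthogonal complement within V
      set V' : Submodule ℝ W := Kᗮ ⊓ V with hV'
      have hVrank' : (2 : ℕ) + finrank ℝ V' = n := by
        have h := Submodule.finrank_add_inf_finrank_orthogonal hKV
        rw [hKrank, hV] at h
        exact h
      have hV'rank : finrank ℝ V' = n - 2 := by omega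
      have hn2 : 2 ≤ n := by omega
      -- orthogonality facts for members of V'
      have horth : ∀ x ∈ V', ⟪v, x⟫ = 0 ∧ ⟪J v, x⟫ = 0 := by
        intro x hx
        have hx1 : x ∈ Kᗮ := hx.1
        constructor
        · exact hx1 v hvK
        · exact hx1 (J v) hJvK
      have hJV' : ∀ x ∈ V', J x ∈ V' := by
        intro x hx
        refine ⟨?_, hJV x hx.2⟩
        apply mem_orth_span_aux
        rintro u (rfl | rfl)
        · have h1 := (horth x hx).2
          have h2 := hJskew v x
          linarith
        · have : ⟪J v, J x⟫ = ⟪v, x⟫ := hJiso v x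
          rw [this, (horth x hx).1]
      have hAV' : ∀ x ∈ V', A x ∈ V' := by
        intro x hx
        refine ⟨?_, hAV x hx.2⟩
        apply mem_orth_span_aux
        rintro u (rfl | rfl)
        · rw [real_inner_comm, hA x v, hAv, inner_smul_right]
          have h0 := (horth x hx).1
          rw [real_inner_comm] at h0
          rw [h0, mul_zero]
        · rw [real_inner_comm, hA x (J v), hAJv, inner_smul_right]
          have h0 := (horth x hx).2
          rw [real_inner_comm] at h0
          rw [h0, mul_zero]
      obtain ⟨m', e', l', hm', hon', hspan', heig'⟩ :=
        ih (n - 2) (by omega) V' hV'rank hJV' hAV'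
      -- members of V'
      have he'V' : ∀ j, e' j ∈ V' := by
        intro j
        rw [← hspan']
        exact Submodule.subset_span ⟨Sum.inl j, rfl⟩
      have hJe'V' : ∀ j, J (e' j) ∈ V' := fun j => hJV' _ (he'V' j)
      -- assemble
      refine ⟨m' + 1, Fin.cons v e', Fin.cons μ l', by omega, ?_, ?_, ?_⟩
      · -- orthonormality
        rw [orthonormal_iff_ite] at hon' ⊢
        have key : ∀ (x : W), x ∈ V' → ⟪v, x⟫ = 0 ∧ ⟪J v, x⟫ = 0 ∧ ⟪x, v⟫ = 0 ∧ ⟪x, J v⟫ = 0 := by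
          intro x hx
          obtain ⟨h1, h2⟩ := horth x hx
          exact ⟨h1, h2, by rw [real_inner_comm]; exact h1, by rw [real_inner_comm]; exact h2⟩
        rintro (i | i) (j | j) <;>
          simp only [Sum.elim_inl, Sum.elim_inr] <;>
          induction i using Fin.cases <;> induction j using Fin.cases <;>
          simp only [Fin.cons_zero, Fin.cons_succ]
        -- inl 0, inl 0
        · simp [hvnorm, hvnorm1]
        · -- inl 0, inl succ j
          rename_i j
          have := (key _ (he'V' j)).1
          simp [this, (Fin.succ_ne_zero j).symm]
        · rename_i i
          have := (key _ (he'V' i)).2.2.1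
          simp [this, (Fin.succ_ne_zero i)]
        · rename_i i j
          have := hon' (Sum.inl i) (Sum.inl j)
          simp only [Sum.elim_inl, Sum.inl.injEq] at this
          simpa using this
        · -- inl 0, inr 0 : ⟪v, J v⟫
          simp [hvJv]
        · rename_i j
          -- ⟪v, J (e' j)⟫
          have := (key _ (hJe'V' j)).1
          simp [this]
        · rename_i i
          -- ⟪e' (succ i), J v⟫
          have := (key _ (he'V' i)).2.2.2
          simp [this]
        · rename_i i j
          have := hon' (Sum.inl i) (Sum.inr j)
          simp only [Sum.elim_inl, Sum.elim_inr] at this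
          simpa using this
        · -- inr 0, inl 0 : ⟪J v, v⟫
          simp [hJvv]
        · rename_i j
          have := (key _ (he'V' j)).2.1
          simp [this]
        · rename_i i
          have := (key _ (hJe'V' i)).2.2.1
          simp [this]
        · rename_i i j
          have := hon' (Sum.inr i) (Sum.inl j)
          simp only [Sum.elim_inl, Sum.elim_inr] at this
          simpa using this
        · -- inr 0, inr 0
          simp [hJvJv, (pow_eq_one_iff_of_nonneg (norm_nonneg (J v)) two_ne_zero).mp (by rw [← real_inner_self_eq_norm_sq, hJvJv])]
        · rename_i j
          have := (key _ (hJe'V' j)).2.1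
          simp [this, (Fin.succ_ne_zero j).symm]
        · rename_i i
          have := (key _ (hJe'V' i)).2.2.2
          simp [this, Fin.succ_ne_zero i]
        · rename_i i j
          have := hon' (Sum.inr i) (Sum.inr j)
          simp only [Sum.elim_inr, Sum.inr.injEq] at this
          simpa using this
      · -- span
        have hrange : Set.range (Sum.elim (Fin.cons v e' : Fin (m' + 1) → W)
            (fun j => J ((Fin.cons v e' : Fin (m' + 1) → W) j)))
            = {v, J v} ∪ Set.range (Sum.elim e' (fun j => J (e' j))) := by
          rw [Set.Sum.elim_range, Set.Sum.elim_range]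
          have h1 : Set.range (Fin.cons v e' : Fin (m' + 1) → W) = insert v (Set.range e') :=
            Fin.range_cons v e'
          have h2 : Set.range (fun j => J ((Fin.cons v e' : Fin (m' + 1) → W) j))
              = insert (J v) (Set.range fun j => J (e' j)) := by
            have : (fun j => J ((Fin.cons v e' : Fin (m' + 1) → W) j))
                = Fin.cons (J v) (fun j => J (e' j)) := by
              funext j
              induction j using Fin.cases <;> simp
            rw [this]
            exact Fin.range_cons _ _
          rw [h1, h2]
          ext x
          simp only [Set.mem_union, Set.mem_insert_iff, Set.mem_singleton_iff]
          tauto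
        rw [hrange, Submodule.span_union, hspan']
        have hKspan : span ℝ ({v, J v} : Set W) = K := rfl
        rw [hKspan]
        -- show K ⊔ V' = V
        have hle : K ⊔ V' ≤ V := sup_le hKV inf_le_right
        have hdisj : K ⊓ V' = ⊥ := by
          have : K ⊓ V' ≤ K ⊓ Kᗮ := le_inf inf_le_left (inf_le_right.trans inf_le_left)
          rw [(Submodule.orthogonal_disjoint K).eq_bot] at this
          exact le_bot_iff.mp this
        have hranksup : finrank ℝ (K ⊔ V' : Submodule ℝ W) = finrank ℝ V := by
          have := Submodule.finrank_sup_add_finrank_inf_eq K V'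
          rw [hdisj, finrank_bot] at this
          omega
        exact Submodule.eq_of_le_of_finrank_le hle (le_of_eq hranksup.symm)
      · -- eigen equation
        intro j
        induction j using Fin.cases with
        | zero => simpa using hAv
        | succ j => simpa using heig' j

theorem stmt2 {W : Type*} [NormedAddCommGroup W] [InnerProductSpace ℝ W]
    [FiniteDimensional ℝ W] (J L : W →ₗ[ℝ] W)
    (hJiso : ∀ x y : W, ⟪J x, J y⟫ = ⟪x, y⟫)
    (hJ2 : ∀ x : W, J (J x) = -x)
    (hL : ∀ x y : W, ⟪L x, y⟫ = -⟪x, L y⟫)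
    (hLJ : ∀ x : W, L (J x) = J (L x)) :
    ∃ (m : ℕ) (e : Fin m → W) (l : Fin m → ℝ),
      Module.finrank ℝ W = 2 * m ∧
      Orthonormal ℝ (Sum.elim e (fun j => J (e j))) ∧
      Submodule.span ℝ (Set.range (Sum.elim e (fun j => J (e j)))) = ⊤ ∧
      ∀ j : Fin m, L (e j) = l j • J (e j) ∧ L (J (e j)) = -(l j) • e j := by
  have hJskew : ∀ x y : W, ⟪J x, y⟫ = -⟪x, J y⟫ := by
    intro x y
    have := hJiso x (J y)
    rw [hJ2 y, inner_neg_right] at this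
    linarith
  set A : W →ₗ[ℝ] W := -(J ∘ₗ L) with hAdef
  have hAx : ∀ x : W, A x = -(J (L x)) := fun x => rfl
  have hA : ∀ x y : W, ⟪A x, y⟫ = ⟪x, A y⟫ := by
    intro x y
    rw [hAx, hAx, inner_neg_left, inner_neg_right, hJskew (L x) y, neg_neg, hL x (J y), hLJ y]
  have hAJ : ∀ x : W, A (J x) = J (A x) := by
    intro x
    rw [hAx, hAx, hLJ, map_neg]
  obtain ⟨m, e, l, hm, hon, hspan, heig⟩ :=
    aux_main J A hJiso hJ2 hA hAJ (finrank ℝ W) ⊤ (finrank_top ℝ W)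
      (fun x _ => Submodule.mem_top) (fun x _ => Submodule.mem_top)
  refine ⟨m, e, l, hm, hon, hspan, ?_⟩
  intro j
  have hLe : L (e j) = l j • J (e j) := by
    have h1 : J (A (e j)) = L (e j) := by
      rw [hAx, map_neg, hJ2, neg_neg]
    rw [← h1, heig j, map_smul]
  refine ⟨hLe, ?_⟩
  rw [hLJ, hLe, map_smul, hJ2, smul_neg, neg_smul]
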